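/- Fix N ≥ 1, α > 1/2, and β ≥ 0 with θ = tanh β. Then ∂A_N(α,β)/∂β = αθ − α·Σ_{m=1}^∞ (−1)^m (1 − θ²) θ^{m−1} ⟨q²_{1,…,m}⟩, where the series converges absolutely and ⟨q²_{1,…,m}⟩ = E[(1/N²) Σ_{i,j ∈ Fin N} (ω(σ_i σ_j))^m] is the quenched replica average of the squared m-replica multi-overlap. -/

import Mathlib

open scoped BigOperators

/-- The set of spin values `{-1, 1}` as a finite subset of `ℝ`. -/
noncomputable abbrev SpinVal : Finset ℝ := {-1, 1}

/-- Spin configurations on `n` sites: maps `Fin n → ℝ` taking values in `{-1,1}`. -/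
abbrev Conf (n : ℕ) := Fin n → SpinVal

/-- Hamiltonian of the diluted ferromagnet for the disorder realization `(k, b)`:
`H(σ) = -Σ_{ν<k} σ_{(bν).1} σ_{(bν).2}`. -/
noncomputable def Hdil {n k : ℕ} (b : Fin k → Fin n × Fin n) (σ : Conf n) : ℝ :=
  - ∑ ν : Fin k, (σ (b ν).1 : ℝ) * (σ (b ν).2 : ℝ)

/-- Partition function of the diluted ferromagnet at inverse temperature `β`. -/
noncomputable def Zdil (n : ℕ) (β : ℝ) {k : ℕ} (b : Fin k → Fin n × Fin n) : ℝ :=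
  ∑ σ : Conf n, Real.exp (-β * Hdil b σ)

/-- Gibbs expectation `ω` of an observable for a fixed disorder realization. -/
noncomputable def gibbs (n : ℕ) (β : ℝ) {k : ℕ} (b : Fin k → Fin n × Fin n)
    (f : Conf n → ℝ) : ℝ :=
  (∑ σ : Conf n, f σ * Real.exp (-β * Hdil b σ)) / Zdil n β b

/-- The Poisson probability mass function with mean `lam`. -/
noncomputable def poissonPMF (lam : ℝ) (k : ℕ) : ℝ :=
  Real.exp (-lam) * lam ^ k / (Nat.factorial k : ℝ)

/-- Quenched expectation at connectivity `α` on `n` sites: the number of bonds `k` is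
Poisson(αn) and the `2k` endpoints are i.i.d. uniform on the `n` sites. -/
noncomputable def quenched (n : ℕ) (α : ℝ)
    (F : (k : ℕ) → (Fin k → Fin n × Fin n) → ℝ) : ℝ :=
  ∑' k : ℕ, poissonPMF (α * n) k *
    ((∑ b : Fin k → Fin n × Fin n, F k b) / ((n : ℝ) ^ 2) ^ k)

/-- Boltzmann weight of the `t`-perturbed (cavity) system with realization
`(k, b, k', l)`: `exp(β Σ_ν σσ + β Σ_μ σ_{l μ})`. -/
noncomputable def cavWeight (n : ℕ) (β : ℝ) {k k' : ℕ} (b : Fin k → Fin n × Fin n)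
    (l : Fin k' → Fin n) (σ : Conf n) : ℝ :=
  Real.exp (β * ∑ ν : Fin k, (σ (b ν).1 : ℝ) * (σ (b ν).2 : ℝ)
    + β * ∑ μ : Fin k', (σ (l μ) : ℝ))

/-- Partition function of the `t`-perturbed (cavity) system. -/
noncomputable def Zcav (n : ℕ) (β : ℝ) {k k' : ℕ} (b : Fin k → Fin n × Fin n)
    (l : Fin k' → Fin n) : ℝ :=
  ∑ σ : Conf n, cavWeight n β b l σ

/-- Gibbs expectation `ω_t` of the `t`-perturbed (cavity) system at fixed realization. -/
noncomputable def gibbsCav (n : ℕ) (β : ℝ) {k k' : ℕ} (b : Fin k → Fin n × Fin n)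
    (l : Fin k' → Fin n) (f : Conf n → ℝ) : ℝ :=
  (∑ σ : Conf n, f σ * cavWeight n β b l σ) / Zcav n β b l

/-- Quenched expectation `E_t` of the `t`-perturbed system at connectivity `αt`:
`k` is Poisson(αt·n), `k'` is Poisson(2·αt·t), and all indices are i.i.d. uniform. -/
noncomputable def quenchedCav (n : ℕ) (αt t : ℝ)
    (F : (k : ℕ) → (Fin k → Fin n × Fin n) → (k' : ℕ) → (Fin k' → Fin n) → ℝ) : ℝ :=
  ∑' k : ℕ, ∑' k' : ℕ, poissonPMF (αt * n) k * poissonPMF (2 * αt * t) k' *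
    ((∑ b : Fin k → Fin n × Fin n, ∑ l : Fin k' → Fin n, F k b k' l) /
      (((n : ℝ) ^ 2) ^ k * (n : ℝ) ^ k'))

/-- The cavity function `Ψ_n(α̃, β; t) = E_t[ln Z_{n,t}] - E[ln Z_n(α̃, β)]`. -/
noncomputable def Psi (n : ℕ) (αt β t : ℝ) : ℝ :=
  quenchedCav n αt t (fun _ b _ l => Real.log (Zcav n β b l))
    - quenched n αt (fun _ b => Real.log (Zdil n β b))

section Aux
variable {n k : ℕ}

lemma spinval_cases (s : SpinVal) : (s : ℝ) = -1 ∨ (s : ℝ) = 1 := by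
  have h := s.2
  rw [Finset.mem_insert, Finset.mem_singleton] at h
  exact_mod_cast h

lemma spinval_sq (s : SpinVal) : (s : ℝ) ^ 2 = 1 := by
  rcases spinval_cases s with h | h <;> rw [h] <;> norm_num

lemma spinval_abs (s : SpinVal) : |(s : ℝ)| = 1 := by
  rcases spinval_cases s with h | h <;> rw [h] <;> norm_num

lemma spin_mul_sq (σ : Conf n) (i j : Fin n) : ((σ i : ℝ) * (σ j : ℝ)) ^ 2 = 1 := by
  rw [mul_pow, spinval_sq, spinval_sq, mul_one]

lemma spin_mul_abs (σ : Conf n) (i j : Fin n) : |(σ i : ℝ) * (σ j : ℝ)| = 1 := by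
  rw [abs_mul, spinval_abs, spinval_abs, mul_one]

instance : Nonempty (SpinVal : Finset ℝ) := ⟨⟨1, by simp [SpinVal]⟩⟩

lemma Zdil_pos (β : ℝ) (b : Fin k → Fin n × Fin n) : 0 < Zdil n β b :=
  Finset.sum_pos (fun σ _ => Real.exp_pos _) Finset.univ_nonempty

lemma abs_Hdil_le (b : Fin k → Fin n × Fin n) (σ : Conf n) : |Hdil b σ| ≤ k := by
  rw [Hdil, abs_neg]
  calc |∑ ν : Fin k, (σ (b ν).1 : ℝ) * (σ (b ν).2 : ℝ)|
      ≤ ∑ ν : Fin k, |(σ (b ν).1 : ℝ) * (σ (b ν).2 : ℝ)| := Finset.abs_sum_le_sum_abs _ _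
    _ = ∑ _ν : Fin k, (1:ℝ) := by simp [spin_mul_abs, spinval_abs]
    _ = k := by simp

lemma abs_gibbs_le (β : ℝ) (b : Fin k → Fin n × Fin n) (f : Conf n → ℝ) (C : ℝ)
    (hC : ∀ σ, |f σ| ≤ C) : |gibbs n β b f| ≤ C := by
  have hZ := Zdil_pos (n := n) β b
  rw [gibbs, abs_div, abs_of_pos hZ, div_le_iff₀ hZ]
  calc |∑ σ : Conf n, f σ * Real.exp (-β * Hdil b σ)|
      ≤ ∑ σ : Conf n, |f σ * Real.exp (-β * Hdil b σ)| := Finset.abs_sum_le_sum_abs _ _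
    _ ≤ ∑ σ : Conf n, C * Real.exp (-β * Hdil b σ) := by
        refine Finset.sum_le_sum fun σ _ => ?_
        rw [abs_mul, abs_of_pos (Real.exp_pos _)]
        exact mul_le_mul_of_nonneg_right (hC σ) (Real.exp_pos _).le
    _ = C * Zdil n β b := by rw [Zdil, Finset.mul_sum]

lemma gibbs_sum (β : ℝ) (b : Fin k → Fin n × Fin n) {ι : Type*} (s : Finset ι)
    (f : ι → Conf n → ℝ) :
    gibbs n β b (fun σ => ∑ ν ∈ s, f ν σ) = ∑ ν ∈ s, gibbs n β b (f ν) := by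
  simp only [gibbs, ← Finset.sum_div]
  congr 1
  simp only [Finset.sum_mul]
  exact Finset.sum_comm ..

lemma hasDerivAt_logZ (β : ℝ) (b : Fin k → Fin n × Fin n) :
    HasDerivAt (fun x => Real.log (Zdil n x b)) (gibbs n β b (fun σ => -Hdil b σ)) β := by
  have hZ := Zdil_pos (n := n) β b
  have hd : HasDerivAt (fun x => Zdil n x b)
      (∑ σ : Conf n, -Hdil b σ * Real.exp (-β * Hdil b σ)) β := by
    apply HasDerivAt.fun_sum
    intro σ _
    have h1 : HasDerivAt (fun x : ℝ => -x * Hdil b σ) (-Hdil b σ) β := by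
      simpa using ((hasDerivAt_id β).neg.mul_const (Hdil b σ))
    simpa [mul_comm] using h1.exp
  have := hd.log hZ.ne'
  exact this

end Aux
section Aux2
variable {n k : ℕ}

lemma poissonPMF_nonneg {lam : ℝ} (h : 0 ≤ lam) (k : ℕ) : 0 ≤ poissonPMF lam k := by
  unfold poissonPMF
  positivity

lemma summable_poissonPMF (lam : ℝ) : Summable (poissonPMF lam) := by
  unfold poissonPMF
  simpa [mul_div_assoc] using (Real.summable_pow_div_factorial lam).mul_left (Real.exp (-lam))

lemma tsum_poissonPMF {lam : ℝ} : ∑' k, poissonPMF lam k = 1 := by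
  unfold poissonPMF
  rw [tsum_congr (fun k => mul_div_assoc (Real.exp (-lam)) (lam ^ k) _), tsum_mul_left]
  have : ∑' k : ℕ, lam ^ k / (Nat.factorial k : ℝ) = Real.exp lam := by
    rw [Real.exp_eq_exp_ℝ, NormedSpace.exp_eq_tsum_div]
  rw [this, ← Real.exp_add]
  simp

lemma poissonPMF_succ (lam : ℝ) (k : ℕ) :
    poissonPMF lam (k + 1) * (k + 1) = lam * poissonPMF lam k := by
  unfold poissonPMF
  rw [Nat.factorial_succ]
  push_cast
  have h : ((k : ℝ) + 1) ≠ 0 := by positivity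
  field_simp
  ring

lemma summable_poissonPMF_mul_self (lam : ℝ) (h : 0 ≤ lam) :
    Summable (fun k => poissonPMF lam k * k) := by
  rw [← summable_nat_add_iff 1]
  rw [show (fun k : ℕ => poissonPMF lam (k + 1) * ↑(k + 1)) = fun k => lam * poissonPMF lam k by
      funext k; rw [← poissonPMF_succ]; push_cast; ring]
  exact (summable_poissonPMF lam).mul_left lam

/-- `Hdil` is invariant under permutation of the bond labels. -/
lemma Hdil_comp_equiv (b : Fin k → Fin n × Fin n) (e : Equiv.Perm (Fin k)) (σ : Conf n) :
    Hdil (b ∘ e) σ = Hdil b σ := by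
  unfold Hdil
  rw [neg_inj]
  exact Equiv.sum_comp e (fun ν => (σ (b ν).1 : ℝ) * (σ (b ν).2 : ℝ))

lemma Zdil_comp_equiv (β : ℝ) (b : Fin k → Fin n × Fin n) (e : Equiv.Perm (Fin k)) :
    Zdil n β (b ∘ e) = Zdil n β b := by
  unfold Zdil
  exact Finset.sum_congr rfl fun σ _ => by rw [Hdil_comp_equiv]

lemma gibbs_comp_equiv (β : ℝ) (b : Fin k → Fin n × Fin n) (e : Equiv.Perm (Fin k))
    (f : Conf n → ℝ) : gibbs n β (b ∘ e) f = gibbs n β b f := by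
  unfold gibbs
  rw [Zdil_comp_equiv]
  congr 1
  exact Finset.sum_congr rfl fun σ _ => by rw [Hdil_comp_equiv]

end Aux2
section Aux3
variable {n k : ℕ}

lemma tanh_nonneg {x : ℝ} (hx : 0 ≤ x) : 0 ≤ Real.tanh x := by
  rw [Real.tanh_eq_sinh_div_cosh]
  apply div_nonneg _ (Real.cosh_pos x).le
  rw [Real.sinh_eq]
  have : Real.exp (-x) ≤ Real.exp x := Real.exp_le_exp.2 (by linarith)
  linarith

lemma tanh_lt_one (x : ℝ) : Real.tanh x < 1 := by
  rw [Real.tanh_eq_sinh_div_cosh, div_lt_one (Real.cosh_pos x)]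
  have h := Real.cosh_sub_sinh x
  have := Real.exp_pos (-x)
  linarith

lemma exp_spin (β s : ℝ) (hs : s = -1 ∨ s = 1) :
    Real.exp (β * s) = Real.cosh β * (1 + Real.tanh β * s) := by
  have hc := (Real.cosh_pos β).ne'
  rcases hs with h | h <;> subst h
  · rw [mul_neg_one, Real.tanh_eq_sinh_div_cosh]
    field_simp
    rw [← Real.cosh_sub_sinh β]
    ring
  · rw [mul_one, mul_one, Real.tanh_eq_sinh_div_cosh]
    field_simp
    exact (Real.cosh_add_sinh β).symm

lemma spin_cases (σ : Conf n) (i j : Fin n) :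
    (σ i : ℝ) * σ j = -1 ∨ (σ i : ℝ) * σ j = 1 := by
  rcases spinval_cases (σ i) with h1 | h1 <;> rcases spinval_cases (σ j) with h2 | h2 <;>
    rw [h1, h2] <;> norm_num

lemma Hdil_cons (x : Fin n × Fin n) (b : Fin k → Fin n × Fin n) (σ : Conf n) :
    Hdil (Fin.cons x b) σ = -((σ x.1 : ℝ) * σ x.2) + Hdil b σ := by
  unfold Hdil
  rw [Fin.sum_univ_succ]
  simp only [Fin.cons_zero, Fin.cons_succ]
  ring

lemma abs_gibbs_bond_le_one (β : ℝ) (b : Fin k → Fin n × Fin n) (i j : Fin n) :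
    |gibbs n β b (fun σ => (σ i : ℝ) * σ j)| ≤ 1 :=
  abs_gibbs_le β b _ 1 (fun σ => by rw [spin_mul_abs])

/-- Adding one bond `(i,j)`: the Gibbs expectation of `σ_i σ_j` transforms by
`(w + θ)/(1 + θ w)`. -/
lemma gibbs_cons (β : ℝ) (hβ : 0 ≤ β) (x : Fin n × Fin n) (b : Fin k → Fin n × Fin n) :
    gibbs n β (Fin.cons x b) (fun σ => (σ x.1 : ℝ) * σ x.2) =
      (gibbs n β b (fun σ => (σ x.1 : ℝ) * σ x.2) + Real.tanh β) /
        (1 + Real.tanh β * gibbs n β b (fun σ => (σ x.1 : ℝ) * σ x.2)) := by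
  set θ := Real.tanh β with hθ
  have hθ0 : 0 ≤ θ := tanh_nonneg hβ
  have hθ1 : θ < 1 := tanh_lt_one β
  have hZ : 0 < Zdil n β b := Zdil_pos β b
  set Z := Zdil n β b with hZdef
  set S := ∑ σ : Conf n, ((σ x.1 : ℝ) * σ x.2) * Real.exp (-β * Hdil b σ) with hSdef
  have habsS : |S| ≤ Z := by
    rw [hSdef, hZdef, Zdil]
    calc |∑ σ : Conf n, ((σ x.1 : ℝ) * σ x.2) * Real.exp (-β * Hdil b σ)|
        ≤ ∑ σ : Conf n, |((σ x.1 : ℝ) * σ x.2) * Real.exp (-β * Hdil b σ)| :=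
          Finset.abs_sum_le_sum_abs _ _
      _ ≤ ∑ σ : Conf n, Real.exp (-β * Hdil b σ) := by
          refine Finset.sum_le_sum fun σ _ => ?_
          rw [abs_mul, spin_mul_abs, one_mul, abs_of_pos (Real.exp_pos _)]
  -- weight identity
  have hw : ∀ σ : Conf n, Real.exp (-β * Hdil (Fin.cons x b) σ)
      = Real.cosh β * ((1 + θ * ((σ x.1 : ℝ) * σ x.2)) * Real.exp (-β * Hdil b σ)) := by
    intro σ
    rw [Hdil_cons, show -β * (-((σ x.1 : ℝ) * σ x.2) + Hdil b σ)
        = β * ((σ x.1 : ℝ) * σ x.2) + -β * Hdil b σ by ring, Real.exp_add,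
      exp_spin β _ (spin_cases σ x.1 x.2)]
    ring
  have hnum : ∑ σ : Conf n, ((σ x.1 : ℝ) * σ x.2) * Real.exp (-β * Hdil (Fin.cons x b) σ)
      = Real.cosh β * (S + θ * Z) := by
    simp only [hw]
    have hterm : ∀ σ : Conf n, ((σ x.1 : ℝ) * σ x.2) *
          (Real.cosh β * ((1 + θ * ((σ x.1 : ℝ) * σ x.2)) * Real.exp (-β * Hdil b σ)))
        = Real.cosh β * (((σ x.1 : ℝ) * σ x.2) * Real.exp (-β * Hdil b σ))
          + Real.cosh β * θ * Real.exp (-β * Hdil b σ) := by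
      intro σ
      have hsq := spin_mul_sq σ x.1 x.2
      linear_combination (Real.cosh β * θ * Real.exp (-β * Hdil b σ)) * hsq
    rw [Finset.sum_congr rfl (fun σ _ => hterm σ), Finset.sum_add_distrib,
      ← Finset.mul_sum, ← Finset.mul_sum, ← hSdef]
    rw [hZdef, Zdil]
    ring
  have hden : Zdil n β (Fin.cons x b) = Real.cosh β * (Z + θ * S) := by
    rw [Zdil]
    simp only [hw]
    have hterm : ∀ σ : Conf n,
        Real.cosh β * ((1 + θ * ((σ x.1 : ℝ) * σ x.2)) * Real.exp (-β * Hdil b σ))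
        = Real.cosh β * Real.exp (-β * Hdil b σ)
          + Real.cosh β * θ * (((σ x.1 : ℝ) * σ x.2) * Real.exp (-β * Hdil b σ)) := by
      intro σ; ring
    rw [Finset.sum_congr rfl (fun σ _ => hterm σ), Finset.sum_add_distrib,
      ← Finset.mul_sum, ← Finset.mul_sum, ← hSdef]
    rw [hZdef, Zdil]
    ring
  have hZS : 0 < Z + θ * S := by nlinarith [abs_le.1 habsS]
  rw [gibbs, hnum, hden]
  have hg : gibbs n β b (fun σ => (σ x.1 : ℝ) * σ x.2) = S / Z := rfl
  rw [hg]
  have hc := (Real.cosh_pos β).ne'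
  rw [mul_div_mul_left _ _ hc]
  field_simp

end Aux3
section Aux4
variable {n : ℕ}

/-- Geometric expansion of `(w+θ)/(1+θw)`. -/
lemma summable_expand (θ w : ℝ) (h0 : 0 ≤ θ) (h1 : θ < 1) (hw : |w| ≤ 1) :
    Summable (fun j : ℕ => (-1 : ℝ) ^ (j + 1) * (1 - θ ^ 2) * θ ^ j * w ^ (j + 1)) := by
  have hterm : ∀ j : ℕ, (-1 : ℝ) ^ (j + 1) * (1 - θ ^ 2) * θ ^ j * w ^ (j + 1)
      = (-(1 - θ ^ 2) * w) * (-(θ * w)) ^ j := by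
    intro j
    have hp : (-(θ * w)) ^ j = (-1 : ℝ) ^ j * θ ^ j * w ^ j := by
      rw [show -(θ * w) = (-1 : ℝ) * θ * w by ring, mul_pow, mul_pow]
    rw [hp, pow_succ, pow_succ]
    ring
  have hnorm : ‖-(θ * w)‖ < 1 := by
    rw [norm_neg, Real.norm_eq_abs, abs_mul, abs_of_nonneg h0]
    calc θ * |w| ≤ θ * 1 := mul_le_mul_of_nonneg_left hw h0
      _ < 1 := by linarith
  have := (summable_geometric_of_norm_lt_one hnorm).mul_left (-(1 - θ ^ 2) * w)
  exact this.congr fun j => (hterm j).symm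

lemma expand_geom (θ w : ℝ) (h0 : 0 ≤ θ) (h1 : θ < 1) (hw : |w| ≤ 1) :
    (w + θ) / (1 + θ * w) =
      θ - ∑' j : ℕ, (-1 : ℝ) ^ (j + 1) * (1 - θ ^ 2) * θ ^ j * w ^ (j + 1) := by
  have hterm : ∀ j : ℕ, (-1 : ℝ) ^ (j + 1) * (1 - θ ^ 2) * θ ^ j * w ^ (j + 1)
      = (-(1 - θ ^ 2) * w) * (-(θ * w)) ^ j := by
    intro j
    have hp : (-(θ * w)) ^ j = (-1 : ℝ) ^ j * θ ^ j * w ^ j := by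
      rw [show -(θ * w) = (-1 : ℝ) * θ * w by ring, mul_pow, mul_pow]
    rw [hp, pow_succ, pow_succ]
    ring
  have hnorm : ‖-(θ * w)‖ < 1 := by
    rw [norm_neg, Real.norm_eq_abs, abs_mul, abs_of_nonneg h0]
    calc θ * |w| ≤ θ * 1 := mul_le_mul_of_nonneg_left hw h0
      _ < 1 := by linarith
  have hden : (0 : ℝ) < 1 + θ * w := by
    have : θ * w ≤ θ * |w| := by
      rcases abs_cases w with ⟨h, _⟩ | ⟨h, _⟩
      · rw [h]
      · nlinarith
    have h2 : -(θ * w) ≤ θ * |w| := by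
      rcases abs_cases w with ⟨h, _⟩ | ⟨h, _⟩ <;> nlinarith
    nlinarith [mul_le_mul_of_nonneg_left hw h0]
  have hden' : (1 + θ * w) ≠ 0 := hden.ne'
  rw [tsum_congr hterm, tsum_mul_left, tsum_geometric_of_norm_lt_one hnorm,
    show (1 : ℝ) - -(θ * w) = 1 + θ * w by ring]
  linear_combination θ * (inv_mul_cancel₀ hden')

end Aux4
section Aux5
variable {n : ℕ}

lemma sum_gibbs_bond_eq (β : ℝ) {k : ℕ} (ν : Fin (k + 1)) :
    ∑ b : Fin (k + 1) → Fin n × Fin n, gibbs n β b (fun σ => (σ (b ν).1 : ℝ) * σ (b ν).2)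
    = ∑ b : Fin (k + 1) → Fin n × Fin n,
        gibbs n β b (fun σ => (σ (b 0).1 : ℝ) * σ (b 0).2) := by
  refine Fintype.sum_equiv
    ⟨fun b => b ∘ Equiv.swap ν 0, fun b => b ∘ Equiv.swap ν 0,
      fun b => by funext y; simp [Function.comp, Equiv.swap_apply_self],
      fun b => by funext y; simp [Function.comp, Equiv.swap_apply_self]⟩
    _ _ fun b => ?_
  show gibbs n β b (fun σ => (σ (b ν).1 : ℝ) * σ (b ν).2)
    = gibbs n β (b ∘ Equiv.swap ν 0)
        (fun σ => (σ ((b ∘ Equiv.swap ν 0) 0).1 : ℝ) * σ ((b ∘ Equiv.swap ν 0) 0).2)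
  have h0 : (b ∘ Equiv.swap ν 0) 0 = b ν := by
    simp [Function.comp, Equiv.swap_apply_right]
  rw [h0, gibbs_comp_equiv]

lemma sum_gibbs_negH (β : ℝ) (k : ℕ) :
    ∑ b : Fin (k + 1) → Fin n × Fin n, gibbs n β b (fun σ => -Hdil b σ)
      = ((k : ℝ) + 1) * ∑ x : Fin n × Fin n, ∑ b : Fin k → Fin n × Fin n,
          gibbs n β (Fin.cons x b) (fun σ => (σ x.1 : ℝ) * σ x.2) := by
  have h1 : ∀ b : Fin (k + 1) → Fin n × Fin n, gibbs n β b (fun σ => -Hdil b σ)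
      = ∑ ν : Fin (k + 1), gibbs n β b (fun σ => (σ (b ν).1 : ℝ) * σ (b ν).2) := by
    intro b
    rw [← gibbs_sum]
    congr 1
    funext σ
    rw [Hdil, neg_neg]
  have h2 : ∑ b : Fin (k + 1) → Fin n × Fin n,
        gibbs n β b (fun σ => (σ (b 0).1 : ℝ) * σ (b 0).2)
      = ∑ x : Fin n × Fin n, ∑ b : Fin k → Fin n × Fin n,
          gibbs n β (Fin.cons x b) (fun σ => (σ x.1 : ℝ) * σ x.2) := by
    have he := Fintype.sum_equiv (Fin.consEquiv (fun _ => Fin n × Fin n))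
      (fun p : (Fin n × Fin n) × (Fin k → Fin n × Fin n) =>
        gibbs n β (Fin.cons p.1 p.2) (fun σ => (σ p.1.1 : ℝ) * σ p.1.2))
      (fun b => gibbs n β b (fun σ => (σ (b 0).1 : ℝ) * σ (b 0).2)) (fun p => rfl)
    rw [← he]
    exact Fintype.sum_prod_type _
  calc ∑ b : Fin (k + 1) → Fin n × Fin n, gibbs n β b (fun σ => -Hdil b σ)
      = ∑ b : Fin (k + 1) → Fin n × Fin n, ∑ ν : Fin (k + 1),
          gibbs n β b (fun σ => (σ (b ν).1 : ℝ) * σ (b ν).2) :=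
        Finset.sum_congr rfl fun b _ => h1 b
    _ = ∑ ν : Fin (k + 1), ∑ b : Fin (k + 1) → Fin n × Fin n,
          gibbs n β b (fun σ => (σ (b ν).1 : ℝ) * σ (b ν).2) := Finset.sum_comm ..
    _ = ∑ _ν : Fin (k + 1), ∑ b : Fin (k + 1) → Fin n × Fin n,
          gibbs n β b (fun σ => (σ (b 0).1 : ℝ) * σ (b 0).2) :=
        Finset.sum_congr rfl fun ν _ => sum_gibbs_bond_eq β ν
    _ = ((k : ℝ) + 1) * ∑ b : Fin (k + 1) → Fin n × Fin n,
          gibbs n β b (fun σ => (σ (b 0).1 : ℝ) * σ (b 0).2) := by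
        rw [Finset.sum_const, Finset.card_univ, Fintype.card_fin, nsmul_eq_mul]
        push_cast
        ring
    _ = _ := by rw [h2]

end Aux5
section Aux6
variable {n k : ℕ}

lemma abs_logZ_le (hn : 1 ≤ n) {β : ℝ} (hβ : 0 ≤ β) (b : Fin k → Fin n × Fin n) :
    |Real.log (Zdil n β b)| ≤ Real.log (Fintype.card (Conf n)) + β * k := by
  have hcard : (1 : ℝ) ≤ (Fintype.card (Conf n) : ℝ) := by
    have : 0 < Fintype.card (Conf n) := Fintype.card_pos
    exact_mod_cast this
  have hlog0 : 0 ≤ Real.log (Fintype.card (Conf n)) := Real.log_nonneg hcard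
  have hβk : ∀ σ : Conf n, -(β * k) ≤ -β * Hdil b σ ∧ -β * Hdil b σ ≤ β * k := by
    intro σ
    have h := abs_le.1 (abs_Hdil_le b σ)
    have h1 := mul_le_mul_of_nonneg_left h.2 hβ
    have h2 := mul_le_mul_of_nonneg_left h.1 hβ
    constructor <;> nlinarith
  have hup : Zdil n β b ≤ (Fintype.card (Conf n) : ℝ) * Real.exp (β * k) := by
    rw [Zdil, ← Finset.card_univ, ← nsmul_eq_mul, ← Finset.sum_const]
    exact Finset.sum_le_sum fun σ _ => Real.exp_le_exp.2 (hβk σ).2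
  have hlo : (Fintype.card (Conf n) : ℝ) * Real.exp (-(β * k)) ≤ Zdil n β b := by
    rw [Zdil, ← Finset.card_univ, ← nsmul_eq_mul, ← Finset.sum_const]
    exact Finset.sum_le_sum fun σ _ => Real.exp_le_exp.2 (hβk σ).1
  have hZ := Zdil_pos (n := n) β b
  rw [abs_le]
  constructor
  · have := Real.log_le_log (by positivity) hlo
    rw [Real.log_mul (by positivity) (Real.exp_ne_zero _), Real.log_exp] at this
    linarith
  · have := Real.log_le_log hZ hup
    rw [Real.log_mul (by positivity) (Real.exp_ne_zero _), Real.log_exp] at this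
    linarith

lemma abs_sum_div_card_le {X : Type*} [Fintype X] (F : X → ℝ) (C D : ℝ)
    (hD : 0 < D) (hcard : (Fintype.card X : ℝ) ≤ D) (hF : ∀ b, |F b| ≤ C) (hC : 0 ≤ C) :
    |(∑ b : X, F b) / D| ≤ C := by
  rw [abs_div, abs_of_pos hD, div_le_iff₀ hD]
  calc |∑ b : X, F b| ≤ ∑ b : X, |F b| := Finset.abs_sum_le_sum_abs _ _
    _ ≤ ∑ _b : X, C := Finset.sum_le_sum fun b _ => hF b
    _ = (Fintype.card X : ℝ) * C := by rw [Finset.sum_const, Finset.card_univ, nsmul_eq_mul]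
    _ ≤ C * D := by rw [mul_comm]; exact mul_le_mul_of_nonneg_left hcard hC
end Aux6
section Aux7

lemma card_bonds (n k : ℕ) :
    ((Fintype.card (Fin k → Fin n × Fin n) : ℝ)) = ((n:ℝ)^2)^k := by
  rw [Fintype.card_fun, Fintype.card_prod, Fintype.card_fin, Fintype.card_fin]
  push_cast
  rw [sq]

lemma abs_quenched_le {n : ℕ} (hn : 1 ≤ n) {α : ℝ} (hα : 0 ≤ α)
    (F : (k : ℕ) → (Fin k → Fin n × Fin n) → ℝ) (C : ℝ) (hC : 0 ≤ C)
    (hF : ∀ k b, |F k b| ≤ C) : |quenched n α F| ≤ C := by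
  have hn0 : (0:ℝ) < n := by exact_mod_cast hn
  have hlam0 : (0:ℝ) ≤ α * n := by positivity
  have hp0 := poissonPMF_nonneg hlam0
  have hpsum := summable_poissonPMF (α * n)
  have hden : ∀ k : ℕ, (0:ℝ) < ((n:ℝ)^2)^k := fun k => by positivity
  have hterm : ∀ k, |poissonPMF (α*n) k *
      ((∑ b : Fin k → Fin n × Fin n, F k b) / ((n:ℝ)^2)^k)| ≤ poissonPMF (α*n) k * C := by
    intro k
    rw [abs_mul, abs_of_nonneg (hp0 k)]
    exact mul_le_mul_of_nonneg_left
      (abs_sum_div_card_le _ C _ (hden k) (le_of_eq (card_bonds n k)) (hF k) hC) (hp0 k)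
  have habs : Summable (fun k => |poissonPMF (α*n) k *
      ((∑ b : Fin k → Fin n × Fin n, F k b) / ((n:ℝ)^2)^k)|) :=
    Summable.of_nonneg_of_le (fun k => abs_nonneg _) hterm (hpsum.mul_right C)
  calc |quenched n α F|
      ≤ ∑' k, |poissonPMF (α*n) k *
          ((∑ b : Fin k → Fin n × Fin n, F k b) / ((n:ℝ)^2)^k)| := by
        have h2 := norm_tsum_le_tsum_norm (f := fun k => poissonPMF (α*n) k *
          ((∑ b : Fin k → Fin n × Fin n, F k b) / ((n:ℝ)^2)^k)) (by
            simpa only [Real.norm_eq_abs] using habs)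
        rw [quenched]
        simpa only [Real.norm_eq_abs] using h2
    _ ≤ ∑' k, poissonPMF (α*n) k * C := Summable.tsum_le_tsum hterm habs (hpsum.mul_right C)
    _ = (∑' k, poissonPMF (α*n) k) * C := tsum_mul_right
    _ = C := by rw [tsum_poissonPMF, one_mul]

end Aux7

set_option maxHeartbeats 1000000 in
/-- **Multi-overlap expansion of the `β`-derivative of the quenched pressure
(finite `N`, exact form).** With `θ = tanh β` and
`⟨q²_{1,…,m}⟩ = E[(1/N²) Σ_{i,j} (ω(σ_iσ_j))^m]` (the series below being indexed by
`m = j + 1`), the series `Σ_{m≥1} (-1)^m (1-θ²) θ^{m-1} ⟨q²_{1,…,m}⟩` converges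
absolutely and
`∂A_N(α,β)/∂β = αθ − α·Σ_{m≥1} (-1)^m (1-θ²) θ^{m-1} ⟨q²_{1,…,m}⟩`. -/
theorem pressure_beta_derivative_overlap_expansion (N : ℕ) (hN : 1 ≤ N)
    (α : ℝ) (hα : 1 / 2 < α) (β : ℝ) (hβ : 0 ≤ β) (θ : ℝ) (hθ : θ = Real.tanh β)
    (q : ℕ → ℝ)
    (hq : ∀ m : ℕ, q m = quenched N α (fun _ b =>
      (1 / (N : ℝ) ^ 2) * ∑ i : Fin N, ∑ j : Fin N,
        (gibbs N β b (fun σ => (σ i : ℝ) * (σ j : ℝ))) ^ m)) :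
    Summable (fun j : ℕ =>
        |(-1 : ℝ) ^ (j + 1) * (1 - θ ^ 2) * θ ^ j * q (j + 1)|) ∧
    HasDerivAt (fun β' : ℝ =>
        (1 / (N : ℝ)) * quenched N α (fun _ b => Real.log (Zdil N β' b)))
      (α * θ - α * ∑' j : ℕ, (-1 : ℝ) ^ (j + 1) * (1 - θ ^ 2) * θ ^ j * q (j + 1))
      β := by
  have hn0 : (0:ℝ) < N := by exact_mod_cast hN
  have hα0 : (0:ℝ) ≤ α := by linarith
  have hlam0 : (0:ℝ) ≤ α * N := by positivity
  have hθ0 : 0 ≤ θ := hθ ▸ tanh_nonneg hβ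
  have hθ1 : θ < 1 := hθ ▸ tanh_lt_one β
  have hθsq : 0 ≤ 1 - θ ^ 2 := by nlinarith
  have hpsum : Summable (poissonPMF (α * N)) := summable_poissonPMF _
  have hp0 : ∀ k, 0 ≤ poissonPMF (α * N) k := poissonPMF_nonneg hlam0
  have hptsum : ∑' k, poissonPMF (α * N) k = 1 := tsum_poissonPMF
  have hu : Summable (fun k => poissonPMF (α * N) k * k) :=
    summable_poissonPMF_mul_self _ hlam0
  have hden : ∀ k : ℕ, (0:ℝ) < ((N:ℝ)^2)^k := fun k => by positivity
  have hgeo : Summable (fun j : ℕ => (1 - θ^2) * θ^j) :=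
    (summable_geometric_of_lt_one hθ0 hθ1).mul_left _
  set p : ℕ → ℝ := poissonPMF (α * N) with hpDef
  -- ### |q m| ≤ 1
  have hqle : ∀ m, |q m| ≤ 1 := by
    intro m
    rw [hq m]
    refine abs_quenched_le hN hα0 _ 1 zero_le_one fun k b => ?_
    rw [abs_mul, abs_of_pos (by positivity : (0:ℝ) < 1 / (N:ℝ)^2),
      div_mul_eq_mul_div, one_mul, div_le_one (by positivity : (0:ℝ) < (N:ℝ)^2)]
    calc |∑ i : Fin N, ∑ j : Fin N, (gibbs N β b fun σ => (σ i:ℝ) * (σ j:ℝ)) ^ m|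
        ≤ ∑ i : Fin N, ∑ j : Fin N, |(gibbs N β b fun σ => (σ i:ℝ) * (σ j:ℝ)) ^ m| := by
          refine le_trans (Finset.abs_sum_le_sum_abs _ _) ?_
          exact Finset.sum_le_sum fun i _ => Finset.abs_sum_le_sum_abs _ _
      _ ≤ ∑ _i : Fin N, ∑ _j : Fin N, (1:ℝ) := by
          refine Finset.sum_le_sum fun i _ => Finset.sum_le_sum fun j _ => ?_
          rw [abs_pow]
          exact pow_le_one₀ (abs_nonneg _) (abs_gibbs_bond_le_one β b i j)
      _ = (N:ℝ) * N := by simp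
      _ ≤ (N:ℝ)^2 := by nlinarith
  -- ### Part 1
  have hpart1 : Summable (fun j : ℕ => |(-1:ℝ)^(j+1) * (1-θ^2) * θ^j * q (j+1)|) := by
    refine Summable.of_nonneg_of_le (fun j => abs_nonneg _) (fun j => ?_) hgeo
    rw [abs_mul, abs_mul, abs_mul, abs_pow, abs_neg, abs_one, one_pow, one_mul,
      abs_of_nonneg hθsq, abs_pow, abs_of_nonneg hθ0]
    calc (1-θ^2) * θ^j * |q (j+1)| ≤ (1-θ^2) * θ^j * 1 :=
          mul_le_mul_of_nonneg_left (hqle _) (by positivity)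
      _ = (1-θ^2) * θ^j := mul_one _
  refine ⟨hpart1, ?_⟩
  -- ### the summand functions and their derivatives
  set g : ℕ → ℝ → ℝ := fun k x => (1/(N:ℝ)) * (p k *
      ((∑ b : Fin k → Fin N × Fin N, Real.log (Zdil N x b)) / ((N:ℝ)^2)^k)) with hgDef
  set g' : ℕ → ℝ → ℝ := fun k x => (1/(N:ℝ)) * (p k *
      ((∑ b : Fin k → Fin N × Fin N, gibbs N x b (fun σ => -Hdil b σ)) / ((N:ℝ)^2)^k))
    with hg'Def
  have hgd : ∀ (k:ℕ) (y:ℝ), HasDerivAt (g k) (g' k y) y := by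
    intro k y
    have h1 : HasDerivAt (fun x => ∑ b : Fin k → Fin N × Fin N, Real.log (Zdil N x b))
        (∑ b : Fin k → Fin N × Fin N, gibbs N y b (fun σ => -Hdil b σ)) y :=
      HasDerivAt.fun_sum fun b _ => hasDerivAt_logZ y b
    have h2 := (h1.div_const (((N:ℝ)^2)^k)).const_mul ((1/(N:ℝ)) * p k)
    have hfun2 : g k = fun x => ((1/(N:ℝ)) * p k) *
        ((∑ b : Fin k → Fin N × Fin N, Real.log (Zdil N x b)) / ((N:ℝ)^2)^k) := by
      funext x
      simp only [hgDef]
      ring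
    rw [hfun2]
    convert h2 using 1
    · rfl
    · rfl
    simp only [hg'Def]
    ring
  have hg'bound : ∀ (k:ℕ) (y:ℝ), ‖g' k y‖ ≤ p k * k := by
    intro k y
    have havg : |(∑ b : Fin k → Fin N × Fin N, gibbs N y b (fun σ => -Hdil b σ))
        / ((N:ℝ)^2)^k| ≤ (k:ℝ) :=
      abs_sum_div_card_le _ _ _ (hden k) (le_of_eq (card_bonds N k))
        (fun b => abs_gibbs_le y b _ k fun σ => by rw [abs_neg]; exact abs_Hdil_le b σ)
        (by positivity)
    have h1N : (1:ℝ)/N ≤ 1 := by rw [div_le_one hn0]; exact_mod_cast hN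
    have := mul_le_mul h1N (mul_le_mul_of_nonneg_left havg (hp0 k))
      (mul_nonneg (hp0 k) (abs_nonneg _)) zero_le_one
    rw [Real.norm_eq_abs]
    simp only [hg'Def]
    rw [abs_mul, abs_mul, abs_of_pos (by positivity : (0:ℝ) < 1/(N:ℝ)),
      abs_of_nonneg (hp0 k)]
    linarith
  have hC1 : (0:ℝ) ≤ Real.log (Fintype.card (Conf N)) :=
    Real.log_nonneg (by exact_mod_cast (Fintype.card_pos (α := Conf N)))
  have hgβ : ∀ k, ‖g k β‖ ≤ p k * Real.log (Fintype.card (Conf N)) + β * (p k * k) := by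
    intro k
    have havg : |(∑ b : Fin k → Fin N × Fin N, Real.log (Zdil N β b)) / ((N:ℝ)^2)^k|
        ≤ Real.log (Fintype.card (Conf N)) + β * k :=
      abs_sum_div_card_le _ _ _ (hden k) (le_of_eq (card_bonds N k))
        (fun b => abs_logZ_le hN hβ b) (by positivity)
    have h1N : (1:ℝ)/N ≤ 1 := by rw [div_le_one hn0]; exact_mod_cast hN
    have h2 := mul_le_mul h1N (mul_le_mul_of_nonneg_left havg (hp0 k))
      (mul_nonneg (hp0 k) (abs_nonneg _)) zero_le_one
    rw [Real.norm_eq_abs]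
    simp only [hgDef]
    rw [abs_mul, abs_mul, abs_of_pos (by positivity : (0:ℝ) < 1/(N:ℝ)),
      abs_of_nonneg (hp0 k)]
    nlinarith [hp0 k]
  have hgsum : Summable (fun k => g k β) :=
    Summable.of_norm_bounded
      ((hpsum.mul_right (Real.log (Fintype.card (Conf N)))).add (hu.mul_left β)) hgβ
  have hDeriv : HasDerivAt (fun z : ℝ => ∑' k, g k z) (∑' k, g' k β) β :=
    hasDerivAt_tsum hu hgd hg'bound hgsum β
  have hfunEq : (fun β' : ℝ => (1/(N:ℝ)) * quenched N α (fun _ b => Real.log (Zdil N β' b)))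
      = fun z : ℝ => ∑' k, g k z := by
    funext z
    rw [quenched, ← tsum_mul_left]
  rw [hfunEq]
  -- ### evaluate the derivative series
  set W : (k : ℕ) → (Fin k → Fin N × Fin N) → Fin N × Fin N → ℝ :=
    fun k b x => gibbs N β b (fun σ => (σ x.1 : ℝ) * σ x.2) with hWdef
  set T : ℕ → ℝ → ℝ := fun j w => (-1:ℝ)^(j+1) * (1-θ^2) * θ^j * w^(j+1) with hTdef
  set R : ℕ → ℕ → ℝ := fun k j =>
    p k * ((∑ x : Fin N × Fin N, ∑ b : Fin k → Fin N × Fin N, T j (W k b x))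
      / ((N:ℝ)^2)^(k+1)) with hRdef
  have hWle : ∀ k b x, |W k b x| ≤ 1 := fun k b x => abs_gibbs_bond_le_one β b x.1 x.2
  have hTsummable : ∀ w : ℝ, |w| ≤ 1 → Summable (fun j => T j w) :=
    fun w hw => summable_expand θ w hθ0 hθ1 hw
  have hTle : ∀ (j:ℕ) (w : ℝ), |w| ≤ 1 → |T j w| ≤ (1-θ^2) * θ^j := by
    intro j w hw
    simp only [hTdef]
    rw [abs_mul, abs_mul, abs_mul, abs_pow, abs_neg, abs_one, one_pow, one_mul,
      abs_of_nonneg hθsq, abs_pow, abs_of_nonneg hθ0, abs_pow]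
    calc (1-θ^2) * θ^j * |w|^(j+1) ≤ (1-θ^2) * θ^j * 1 :=
          mul_le_mul_of_nonneg_left (pow_le_one₀ (abs_nonneg _) hw) (by positivity)
      _ = (1-θ^2) * θ^j := mul_one _
  -- g' 0 β = 0 and summability
  have hg'0 : g' 0 β = 0 := by
    simp [hg'Def, gibbs, Hdil]
  have hg'summable : Summable (fun k => g' k β) :=
    Summable.of_norm_bounded hu (fun k => hg'bound k β)
  -- per-k evaluation
  have hstep : ∀ k : ℕ, g' (k+1) β = α * (p k * θ) - α * ∑' j, R k j := by
    intro k
    have hA : ∀ (x : Fin N × Fin N) (b : Fin k → Fin N × Fin N),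
        gibbs N β (Fin.cons x b) (fun σ => (σ x.1:ℝ) * σ x.2)
          = θ - ∑' j, T j (W k b x) := by
      intro x b
      rw [gibbs_cons β hβ x b, ← hθ]
      exact expand_geom θ (W k b x) hθ0 hθ1 (hWle k b x)
    have hconst : (∑ _x : Fin N × Fin N, ∑ _b : Fin k → Fin N × Fin N, θ)
        = ((N:ℝ)^2)^(k+1) * θ := by
      rw [Finset.sum_const, Finset.card_univ, nsmul_eq_mul, Finset.sum_const,
        Finset.card_univ, nsmul_eq_mul, card_bonds, Fintype.card_prod, Fintype.card_fin]
      push_cast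
      rw [pow_succ]
      ring
    have hswap : ∑ x : Fin N × Fin N, ∑ b : Fin k → Fin N × Fin N, (∑' j, T j (W k b x))
        = ∑' j, ∑ x : Fin N × Fin N, ∑ b : Fin k → Fin N × Fin N, T j (W k b x) := by
      rw [Summable.tsum_finsetSum fun x _ => summable_sum fun b _ => hTsummable _ (hWle k b x)]
      exact Finset.sum_congr rfl fun x _ =>
        (Summable.tsum_finsetSum fun b _ => hTsummable _ (hWle k b x)).symm
    have hA2 : ∑ x : Fin N × Fin N, ∑ b : Fin k → Fin N × Fin N,
          gibbs N β (Fin.cons x b) (fun σ => (σ x.1:ℝ) * σ x.2)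
        = ((N:ℝ)^2)^(k+1) * θ
          - ∑' j, ∑ x : Fin N × Fin N, ∑ b : Fin k → Fin N × Fin N, T j (W k b x) := by
      rw [← hconst, ← hswap, ← Finset.sum_sub_distrib]
      refine Finset.sum_congr rfl fun x _ => ?_
      rw [← Finset.sum_sub_distrib]
      exact Finset.sum_congr rfl fun b _ => hA x b
    have e1 : g' (k+1) β = (1/(N:ℝ)) * (p (k+1) *
        ((((k:ℝ)+1) * (((N:ℝ)^2)^(k+1) * θ
          - ∑' j, ∑ x : Fin N × Fin N, ∑ b : Fin k → Fin N × Fin N, T j (W k b x)))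
          / ((N:ℝ)^2)^(k+1))) := by
      simp only [hg'Def]
      rw [sum_gibbs_negH β k, hA2]
    have key : ∀ S : ℝ, (1/(N:ℝ)) * (p (k+1) *
        ((((k:ℝ)+1) * (((N:ℝ)^2)^(k+1) * θ - S)) / ((N:ℝ)^2)^(k+1)))
        = α * (p k * θ) - α * (p k * (S / ((N:ℝ)^2)^(k+1))) := by
      intro S
      have hps := poissonPMF_succ (α * (N:ℝ)) k
      have hk1 : ((k:ℝ)+1) ≠ 0 := by positivity
      have hpk1 : p (k+1) = (α * N * p k)/((k:ℝ)+1) := by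
        rw [eq_div_iff hk1]
        simpa [hpDef] using hps
      rw [hpk1]
      have hdk := (hden (k+1)).ne'
      field_simp
    rw [e1, key]
    congr 1
    rw [← tsum_div_const, ← tsum_mul_left]
  -- summability of R
  have hRbound : ∀ z : ℕ × ℕ, ‖R z.1 z.2‖ ≤ p z.1 * ((1-θ^2) * θ^z.2) := by
    rintro ⟨k, j⟩
    have h0 : |(∑ x : Fin N × Fin N, ∑ b : Fin k → Fin N × Fin N, T j (W k b x))|
        ≤ ((N:ℝ)^2)^(k+1) * ((1-θ^2) * θ^j) := by
      calc |(∑ x : Fin N × Fin N, ∑ b : Fin k → Fin N × Fin N, T j (W k b x))|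
          ≤ ∑ x : Fin N × Fin N, ∑ b : Fin k → Fin N × Fin N, |T j (W k b x)| :=
            le_trans (Finset.abs_sum_le_sum_abs _ _)
              (Finset.sum_le_sum fun x _ => Finset.abs_sum_le_sum_abs _ _)
        _ ≤ ∑ _x : Fin N × Fin N, ∑ _b : Fin k → Fin N × Fin N, ((1-θ^2) * θ^j) :=
            Finset.sum_le_sum fun x _ => Finset.sum_le_sum fun b _ => hTle j _ (hWle k b x)
        _ = ((N:ℝ)^2)^(k+1) * ((1-θ^2) * θ^j) := by
            rw [Finset.sum_const, Finset.card_univ, nsmul_eq_mul, Finset.sum_const,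
              Finset.card_univ, nsmul_eq_mul, card_bonds, Fintype.card_prod,
              Fintype.card_fin]
            push_cast
            rw [pow_succ]
            ring
    have h1 : |(∑ x : Fin N × Fin N, ∑ b : Fin k → Fin N × Fin N, T j (W k b x))
        / ((N:ℝ)^2)^(k+1)| ≤ (1-θ^2) * θ^j := by
      rw [abs_div, abs_of_pos (hden (k+1)), div_le_iff₀ (hden (k+1))]
      exact h0.trans_eq (mul_comm _ _)
    rw [Real.norm_eq_abs]
    simp only [hRdef]
    rw [abs_mul, abs_of_nonneg (hp0 k)]
    exact mul_le_mul_of_nonneg_left h1 (hp0 k)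
  have hRsummable : Summable (fun z : ℕ × ℕ => R z.1 z.2) :=
    Summable.of_norm_bounded
      (hpsum.mul_of_nonneg hgeo (fun k => hp0 k) (fun j => by positivity)) hRbound
  -- the column sums
  have hcol : ∀ j : ℕ, ∑' k, R k j = ((-1:ℝ)^(j+1) * (1-θ^2) * θ^j) * q (j+1) := by
    intro j
    have hRre : ∀ k : ℕ, R k j = ((-1:ℝ)^(j+1) * (1-θ^2) * θ^j) *
        (p k * ((∑ b : Fin k → Fin N × Fin N, (1/(N:ℝ)^2) *
          ∑ i : Fin N, ∑ j' : Fin N,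
            (gibbs N β b (fun σ => (σ i:ℝ) * (σ j':ℝ)))^(j+1)) / ((N:ℝ)^2)^k)) := by
      intro k
      simp only [hRdef, hTdef, hWdef]
      rw [Finset.sum_comm]
      simp only [← Finset.mul_sum, Fintype.sum_prod_type]
      rw [pow_succ]
      have hd1 := (hden k).ne'
      have hd2 : ((N:ℝ)^2) ≠ 0 := by positivity
      field_simp
      ring
    rw [tsum_congr hRre, tsum_mul_left, hq (j+1)]
    rfl
  -- assembly
  have hs1 : Summable (fun k => α * (p k * θ)) := (hpsum.mul_right θ).mul_left α
  have hs2 : Summable (fun k => α * ∑' j, R k j) := hRsummable.prod.mul_left α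
  have hval : ∑' k, g' k β
      = α * θ - α * ∑' j : ℕ, (-1:ℝ)^(j+1) * (1-θ^2) * θ^j * q (j+1) := by
    rw [Summable.tsum_eq_zero_add hg'summable, hg'0, zero_add, tsum_congr hstep,
      Summable.tsum_sub hs1 hs2]
    have e2 : ∑' k, α * (p k * θ) = α * θ := by
      rw [tsum_mul_left, tsum_mul_right, hptsum, one_mul]
    have e3 : ∑' k, α * ∑' j, R k j
        = α * ∑' j : ℕ, (-1:ℝ)^(j+1) * (1-θ^2) * θ^j * q (j+1) := by
      rw [tsum_mul_left]
      congr 1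
      rw [← Summable.tsum_comm (f := R) hRsummable]
      exact tsum_congr hcol
    rw [e2, e3]
  rw [← hval]
  exact hDeriv
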